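/- Let N₁ ≫ N₂ ≥ 1 be dyadic, φ₁, φ₂ ∈ L²(𝕋) with Fourier support of φⱼ in the annulus {N_j/2 ≤ |n| ≤ 2N_j} (or |n| ≤ 2 if N_j = 1), and 0 < δ ≲ N₁⁻¹. Then ‖e^{it∂ₓ²}φ₁ · conj(e^{it∂ₓ²}φ₂)‖_{L²([0,δ];L²(𝕋))} ≲ N₁^{-1/2} ‖φ₁‖_{L²} ‖φ₂‖_{L²}. -/

import Mathlib

open MeasureTheory

instance : Fact (0 < 2 * Real.pi) := ⟨by positivity⟩

/-- The free periodic Schrödinger evolution `e^{it∂ₓ²}φ`, written in terms of the Fourier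
coefficients `c` of `φ`. -/
noncomputable def schrodingerEvol (c : ℤ → ℂ) (t : ℝ) (x : AddCircle (2 * Real.pi)) : ℂ :=
  ∑' n : ℤ, c n * Complex.exp (-Complex.I * (n : ℂ) ^ 2 * (t : ℂ)) * fourier n x

open ComplexConjugate Real

section Aux

lemma integral_fourier_volume {T : ℝ} [hT : Fact (0 < T)] (n : ℤ) :
    ∫ x : AddCircle T, fourier n x = if n = 0 then (T : ℂ) else 0 := by
  rw [AddCircle.volume_eq_smul_haarAddCircle, integral_smul_measure,
    ENNReal.toReal_ofReal hT.out.le]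
  rcases eq_or_ne n 0 with h | h
  · subst h
    simp only [fourier_zero, if_pos rfl]
    rw [integral_const, probReal_univ, one_smul, Complex.real_smul, mul_one]
    simp
  · rw [if_neg h, integral_eq_zero_of_add_right_eq_neg (μ := AddCircle.haarAddCircle)
      (fourier_add_half_inv_index h hT.out), smul_zero]

lemma cont_integrable {T : ℝ} [Fact (0 < T)] {f : AddCircle T → ℂ} (hf : Continuous f) :
    Integrable f := hf.integrable_of_hasCompactSupport (isClosed_tsupport f).isCompact

lemma ofReal_normSq' (z : ℂ) : ((‖z‖ ^ 2 : ℝ) : ℂ) = z * conj z := by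
  rw [Complex.mul_conj]; norm_cast; rw [Complex.sq_norm]

lemma contAux (bb cc : ℂ) : Continuous fun t : ℝ => bb * Complex.exp (cc * (t:ℂ)) :=
  continuous_const.mul
    (Complex.continuous_exp.comp (continuous_const.mul Complex.continuous_ofReal))

lemma l2_fourier_sum {T : ℝ} [hT : Fact (0 < T)] {ι : Type*} (s : Finset ι) (a : ι → ℂ)
    (e : ι → ℤ) :
    ((∫ x : AddCircle T, ‖∑ i ∈ s, a i * fourier (e i) x‖ ^ 2 : ℝ) : ℂ)
      = T * ∑ i ∈ s, ∑ j ∈ s, (if e i = e j then a i * conj (a j) else 0) := by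
  classical
  have key : ∀ x : AddCircle T, ((‖∑ i ∈ s, a i * fourier (e i) x‖ ^ 2 : ℝ) : ℂ)
      = ∑ i ∈ s, ∑ j ∈ s, (a i * conj (a j)) * fourier (e i - e j) x := by
    intro x
    rw [ofReal_normSq', map_sum, Finset.sum_mul_sum]
    refine Finset.sum_congr rfl fun i _ => Finset.sum_congr rfl fun j _ => ?_
    rw [map_mul, ← fourier_neg, show e i - e j = e i + -(e j) by ring, fourier_add]
    ring
  rw [show ((∫ x : AddCircle T, ‖∑ i ∈ s, a i * fourier (e i) x‖ ^ 2 : ℝ) : ℂ)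
      = ∫ x : AddCircle T, ((‖∑ i ∈ s, a i * fourier (e i) x‖ ^ 2 : ℝ) : ℂ)
    from (integral_ofReal (𝕜 := ℂ)).symm]
  simp_rw [key]
  rw [integral_finset_sum _ (fun i _ => integrable_finset_sum _ (fun j _ =>
    cont_integrable (f := fun x => a i * conj (a j) * fourier (e i - e j) x) (continuous_const.mul (fourier _).continuous)))]
  have : ∀ i ∈ s, ∫ x : AddCircle T, ∑ j ∈ s, (a i * conj (a j)) * fourier (e i - e j) x
      = ∑ j ∈ s, (a i * conj (a j)) * (if e i - e j = 0 then (T:ℂ) else 0) := by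
    intro i _
    rw [integral_finset_sum _ (fun j _ =>
      cont_integrable (f := fun x => a i * conj (a j) * fourier (e i - e j) x) (continuous_const.mul (fourier _).continuous))]
    refine Finset.sum_congr rfl fun j _ => ?_
    rw [MeasureTheory.integral_const_mul, integral_fourier_volume]
  rw [Finset.sum_congr rfl this, Finset.mul_sum]
  refine Finset.sum_congr rfl fun i _ => ?_
  rw [Finset.mul_sum]
  refine Finset.sum_congr rfl fun j _ => ?_
  by_cases h : e i = e j
  · rw [if_pos (sub_eq_zero.mpr h), if_pos h]; ring
  · rw [if_neg (sub_ne_zero.mpr h), if_neg h, mul_zero, mul_zero]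

lemma time_orth {ι : Type*} (s : Finset ι) (b : ι → ℂ) (w : ι → ℤ) (μ : ℤ) (hμ : μ ≠ 0)
    (hw : ∀ i ∈ s, ∀ j ∈ s, i ≠ j → ∃ k : ℤ, k ≠ 0 ∧ w i - w j = 2 * μ * k) :
    ∫ t in (0:ℝ)..(π / |(μ:ℝ)|),
        ‖∑ i ∈ s, b i * Complex.exp (-Complex.I * (w i : ℂ) * (t : ℂ))‖ ^ 2
      = (π / |(μ:ℝ)|) * ∑ i ∈ s, ‖b i‖ ^ 2 := by
  classical
  have hμC : (μ:ℂ) ≠ 0 := Int.cast_ne_zero.mpr hμ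
  have key : ∀ t : ℝ,
      ((‖∑ i ∈ s, b i * Complex.exp (-Complex.I * (w i : ℂ) * (t : ℂ))‖ ^ 2 : ℝ) : ℂ)
      = ∑ i ∈ s, ∑ j ∈ s, (b i * conj (b j)) *
          Complex.exp ((-Complex.I * ((w i : ℂ) - (w j : ℂ))) * (t : ℂ)) := by
    intro t
    rw [ofReal_normSq', map_sum, Finset.sum_mul_sum]
    refine Finset.sum_congr rfl fun i _ => Finset.sum_congr rfl fun j _ => ?_
    rw [map_mul, ← Complex.exp_conj]
    have hc : conj (-Complex.I * (w j : ℂ) * (t : ℂ)) = Complex.I * (w j : ℂ) * (t : ℂ) := by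
      simp [map_mul, Complex.conj_I, Complex.conj_ofReal]
    rw [hc, mul_mul_mul_comm, ← Complex.exp_add]
    congr 1
    ring
  apply Complex.ofReal_injective
  rw [show ((∫ t in (0:ℝ)..(π / |(μ:ℝ)|),
        ‖∑ i ∈ s, b i * Complex.exp (-Complex.I * (w i : ℂ) * (t : ℂ))‖ ^ 2 : ℝ) : ℂ)
      = ∫ t in (0:ℝ)..(π / |(μ:ℝ)|),
        ((‖∑ i ∈ s, b i * Complex.exp (-Complex.I * (w i : ℂ) * (t : ℂ))‖ ^ 2 : ℝ) : ℂ)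
    from (intervalIntegral.integral_ofReal).symm]
  simp_rw [key]
  rw [intervalIntegral.integral_finset_sum fun i _ => Continuous.intervalIntegrable
      (continuous_finset_sum _ fun j _ => contAux _ _) _ _]
  have inner : ∀ i ∈ s, (∫ t in (0:ℝ)..(π / |(μ:ℝ)|), ∑ j ∈ s, (b i * conj (b j)) *
          Complex.exp ((-Complex.I * ((w i : ℂ) - (w j : ℂ))) * (t : ℂ)))
      = ∑ j ∈ s, if j = i then ((π / |(μ:ℝ)| : ℝ) : ℂ) * (b i * conj (b j)) else 0 := by
    intro i hi
    rw [intervalIntegral.integral_finset_sum fun j _ => (contAux _ _).intervalIntegrable _ _]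
    refine Finset.sum_congr rfl fun j hj => ?_
    by_cases h : j = i
    · subst h
      simp only [sub_self, mul_zero, zero_mul, Complex.exp_zero, mul_one]
      rw [intervalIntegral.integral_const, sub_zero]
      simp [Complex.real_smul]
    · rw [if_neg h]
      obtain ⟨k, hk0, hk⟩ := hw i hi j hj (Ne.symm h)
      have hwc : ((w i : ℂ) - (w j : ℂ)) = ((2 * μ * k : ℤ) : ℂ) := by
        rw [← hk]; push_cast; ring
      have hc0 : -Complex.I * ((w i : ℂ) - (w j : ℂ)) ≠ 0 := by
        rw [hwc]
        simp only [ne_eq, neg_mul, neg_eq_zero, mul_eq_zero, Complex.I_ne_zero, false_or]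
        exact_mod_cast mul_ne_zero (mul_ne_zero two_ne_zero hμ) hk0
      rw [intervalIntegral.integral_const_mul, integral_exp_mul_complex hc0]
      have hexp : Complex.exp (-Complex.I * ((w i : ℂ) - (w j : ℂ))
          * ((π / |(μ:ℝ)| : ℝ) : ℂ)) = 1 := by
        rcases hμ.lt_or_gt with hneg | hpos
        · have habs : |(μ:ℝ)| = -(μ:ℝ) := abs_of_neg (by exact_mod_cast hneg)
          have heq : -Complex.I * ((w i : ℂ) - (w j : ℂ)) * ((π / |(μ:ℝ)| : ℝ) : ℂ)
              = ((k:ℤ):ℂ) * (2 * ↑π * Complex.I) := by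
            rw [hwc, habs]; push_cast; field_simp
          rw [heq, Complex.exp_int_mul_two_pi_mul_I]
        · have habs : |(μ:ℝ)| = (μ:ℝ) := abs_of_pos (by exact_mod_cast hpos)
          have heq : -Complex.I * ((w i : ℂ) - (w j : ℂ)) * ((π / |(μ:ℝ)| : ℝ) : ℂ)
              = ((-k:ℤ):ℂ) * (2 * ↑π * Complex.I) := by
            rw [hwc, habs]; push_cast; field_simp
          rw [heq, Complex.exp_int_mul_two_pi_mul_I]
      rw [hexp]
      norm_num
  rw [Finset.sum_congr rfl inner]
  have final : ∀ i ∈ s,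
      (∑ j ∈ s, if j = i then ((π / |(μ:ℝ)| : ℝ) : ℂ) * (b i * conj (b j)) else 0)
      = ((π / |(μ:ℝ)| : ℝ) : ℂ) * ((‖b i‖ ^ 2 : ℝ) : ℂ) := by
    intro i hi
    rw [Finset.sum_ite_eq' s i (fun j => ((π / |(μ:ℝ)| : ℝ) : ℂ) * (b i * conj (b j))),
      if_pos hi, ← ofReal_normSq']
  rw [Finset.sum_congr rfl final]
  push_cast
  rw [Finset.mul_sum]

lemma fiber_group {α : Type*} (P : Finset α) (m : α → ℤ) (A : α → ℂ) :
    ∑ p ∈ P, ∑ q ∈ P, (if m p = m q then A p * conj (A q) else 0)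
      = ∑ μ ∈ P.image m, ((‖∑ p ∈ P.filter (fun p => m p = μ), A p‖ ^ 2 : ℝ) : ℂ) := by
  classical
  rw [← Finset.sum_fiberwise_of_maps_to (fun p hp => Finset.mem_image_of_mem m hp)
      (fun p => ∑ q ∈ P, if m p = m q then A p * conj (A q) else 0)]
  refine Finset.sum_congr rfl fun μ hμ => ?_
  have step : ∀ p ∈ P.filter (fun p => m p = μ),
      (∑ q ∈ P, if m p = m q then A p * conj (A q) else 0)
      = A p * conj (∑ q ∈ P.filter (fun q => m q = μ), A q) := by
    intro p hp
    have hpμ : m p = μ := (Finset.mem_filter.mp hp).2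
    rw [map_sum, Finset.mul_sum, Finset.sum_filter]
    refine Finset.sum_congr rfl fun q hq => ?_
    by_cases h : m q = μ
    · rw [if_pos (by rw [hpμ, h]), if_pos h]
    · rw [if_neg (by rw [hpμ]; exact fun hh => h hh.symm), if_neg h]
  rw [Finset.sum_congr rfl step, ← Finset.sum_mul, ← ofReal_normSq']

end Aux

/-- Bilinear Strichartz for separated dyadic frequencies `N₁ ≫ N₂`:
`‖e^{it∂ₓ²}φ₁ conj(e^{it∂ₓ²}φ₂)‖_{L²([0,δ];L²(𝕋))} ≲ N₁^{-1/2}‖φ₁‖_{L²}‖φ₂‖_{L²}` for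
`0 < δ ≲ N₁⁻¹` (squared form). -/
theorem stmt13 :
    ∃ C₀ > (0:ℝ), ∃ C > (0:ℝ), ∀ k₁ k₂ : ℕ,
      let N₁ : ℝ := 2 ^ k₁
      let N₂ : ℝ := 2 ^ k₂
      C₀ * N₂ ≤ N₁ →
      ∀ c₁ c₂ : ℤ → ℂ, Summable (fun n => ‖c₁ n‖) → Summable (fun n => ‖c₂ n‖) →
      (∀ n : ℤ, c₁ n ≠ 0 → N₁ / 2 ≤ |(n : ℝ)| ∧ |(n : ℝ)| ≤ 2 * N₁) →
      (∀ n : ℤ, c₂ n ≠ 0 → |(n : ℝ)| ≤ 2 * N₂ ∧ (N₂ ≤ 1 ∨ N₂ / 2 ≤ |(n : ℝ)|)) →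
      ∀ δ : ℝ, 0 < δ → δ ≤ N₁⁻¹ →
      (∫ t in (0:ℝ)..δ, ∫ x : AddCircle (2 * Real.pi),
          ‖schrodingerEvol c₁ t x * (starRingEnd ℂ) (schrodingerEvol c₂ t x)‖ ^ 2)
        ≤ C * N₁⁻¹ * (∑' n : ℤ, ‖c₁ n‖ ^ 2) * (∑' n : ℤ, ‖c₂ n‖ ^ 2) := by
  classical
  refine ⟨8, by norm_num, 128, by norm_num, ?_⟩
  intro k₁ k₂ N₁ N₂ hsep c₁ c₂ hsum₁ hsum₂ hc₁ hc₂ δ hδ hδN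
  have hN₁def : N₁ = 2 ^ k₁ := rfl
  have hN₂def : N₂ = 2 ^ k₂ := rfl
  have hN₁ : (0:ℝ) < N₁ := by rw [hN₁def]; positivity
  have hN₂ : (0:ℝ) < N₂ := by rw [hN₂def]; positivity
  set S₁ : Finset ℤ :=
    (Finset.Icc (-(2 * 2 ^ k₁ : ℤ)) (2 * 2 ^ k₁)).filter (fun n => c₁ n ≠ 0) with hS₁def
  set S₂ : Finset ℤ :=
    (Finset.Icc (-(2 * 2 ^ k₂ : ℤ)) (2 * 2 ^ k₂)).filter (fun n => c₂ n ≠ 0) with hS₂def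
  have hmem₁ : ∀ n : ℤ, c₁ n ≠ 0 → n ∈ S₁ := by
    intro n hn
    refine Finset.mem_filter.mpr ⟨Finset.mem_Icc.mpr ?_, hn⟩
    have h := (hc₁ n hn).2
    rw [abs_le, hN₁def] at h
    constructor
    · exact_mod_cast h.1
    · exact_mod_cast h.2
  have hmem₂ : ∀ n : ℤ, c₂ n ≠ 0 → n ∈ S₂ := by
    intro n hn
    refine Finset.mem_filter.mpr ⟨Finset.mem_Icc.mpr ?_, hn⟩
    have h := (hc₂ n hn).1
    rw [abs_le, hN₂def] at h
    constructor
    · exact_mod_cast h.1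
    · exact_mod_cast h.2
  set P : Finset (ℤ × ℤ) := S₁ ×ˢ S₂ with hPdef
  set m : ℤ × ℤ → ℤ := fun p => p.1 - p.2 with hmdef
  set w : ℤ × ℤ → ℤ := fun p => p.1 ^ 2 - p.2 ^ 2 with hwdef
  set B : ℤ × ℤ → ℂ := fun p => c₁ p.1 * conj (c₂ p.2) with hBdef
  set A : ℝ → ℤ × ℤ → ℂ :=
    fun t p => B p * Complex.exp (-Complex.I * (w p : ℂ) * (t : ℂ)) with hAdef
  -- Step 1: the product is a finite Fourier sum
  have prodid : ∀ (t : ℝ) (x : AddCircle (2 * π)),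
      schrodingerEvol c₁ t x * conj (schrodingerEvol c₂ t x)
        = ∑ p ∈ P, A t p * fourier (m p) x := by
    intro t x
    have e₁ : schrodingerEvol c₁ t x
        = ∑ n ∈ S₁, c₁ n * Complex.exp (-Complex.I * (n:ℂ) ^ 2 * (t:ℂ)) * fourier n x := by
      apply tsum_eq_sum
      intro n hn
      have h0 : c₁ n = 0 := by
        by_contra h
        exact hn (hmem₁ n h)
      simp [h0]
    have e₂ : schrodingerEvol c₂ t x
        = ∑ n ∈ S₂, c₂ n * Complex.exp (-Complex.I * (n:ℂ) ^ 2 * (t:ℂ)) * fourier n x := by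
      apply tsum_eq_sum
      intro n hn
      have h0 : c₂ n = 0 := by
        by_contra h
        exact hn (hmem₂ n h)
      simp [h0]
    rw [e₁, e₂, map_sum, Finset.sum_mul_sum, hPdef, Finset.sum_product]
    refine Finset.sum_congr rfl fun n₁ _ => Finset.sum_congr rfl fun n₂ _ => ?_
    have hc : conj (-Complex.I * (n₂:ℂ) ^ 2 * (t:ℂ)) = Complex.I * (n₂:ℂ) ^ 2 * (t:ℂ) := by
      simp [map_mul, Complex.conj_I, Complex.conj_ofReal]
    have eexp : Complex.exp (-Complex.I * (n₁:ℂ) ^ 2 * (t:ℂ))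
        * Complex.exp (Complex.I * (n₂:ℂ) ^ 2 * (t:ℂ))
        = Complex.exp (-Complex.I * ((n₁ ^ 2 - n₂ ^ 2 : ℤ) : ℂ) * (t:ℂ)) := by
      rw [← Complex.exp_add]
      congr 1
      push_cast
      ring
    have efour : (fourier n₁ x : ℂ) * conj (fourier n₂ x) = (fourier (n₁ - n₂) x : ℂ) := by
      rw [sub_eq_add_neg, fourier_add, fourier_neg]
    calc (c₁ n₁ * Complex.exp (-Complex.I * (n₁:ℂ) ^ 2 * (t:ℂ)) * fourier n₁ x)
          * conj (c₂ n₂ * Complex.exp (-Complex.I * (n₂:ℂ) ^ 2 * (t:ℂ)) * fourier n₂ x)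
        = (c₁ n₁ * conj (c₂ n₂))
          * (Complex.exp (-Complex.I * (n₁:ℂ) ^ 2 * (t:ℂ))
              * Complex.exp (Complex.I * (n₂:ℂ) ^ 2 * (t:ℂ)))
          * ((fourier n₁ x : ℂ) * conj (fourier n₂ x)) := by
          rw [map_mul, map_mul, ← Complex.exp_conj, hc]; ring
      _ = A t (n₁, n₂) * fourier (m (n₁, n₂)) x := by
          rw [eexp, efour]
  -- Step 2: spatial Parseval, for fixed t
  have spatial : ∀ t : ℝ,
      (∫ x : AddCircle (2 * π),
          ‖schrodingerEvol c₁ t x * conj (schrodingerEvol c₂ t x)‖ ^ 2)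
      = (2 * π) * ∑ μ ∈ P.image m, ‖∑ p ∈ P.filter (fun p => m p = μ), A t p‖ ^ 2 := by
    intro t
    apply Complex.ofReal_injective
    have hfun : (fun x : AddCircle (2 * π) =>
        (‖schrodingerEvol c₁ t x * conj (schrodingerEvol c₂ t x)‖ ^ 2 : ℝ))
        = fun x => ‖∑ p ∈ P, A t p * fourier (m p) x‖ ^ 2 := by
      funext x
      rw [prodid t x]
    rw [hfun, l2_fourier_sum P (A t) m, fiber_group P m (A t)]
    push_cast
    ring
  -- continuity of the fiber sums in time
  have contA : ∀ μ : ℤ,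
      Continuous (fun t : ℝ => ‖∑ p ∈ P.filter (fun p => m p = μ), A t p‖ ^ 2) := by
    intro μ
    have h : Continuous (fun t : ℝ => ∑ p ∈ P.filter (fun p => m p = μ), A t p) := by
      apply continuous_finset_sum
      intro p _
      simp only [hAdef]
      exact contAux _ _
    exact h.norm.pow 2
  -- Step 3: per-frequency time bound
  have per : ∀ μ ∈ P.image m,
      (∫ t in (0:ℝ)..δ, ‖∑ p ∈ P.filter (fun p => m p = μ), A t p‖ ^ 2)
      ≤ (π / (N₁ / 4)) * ∑ p ∈ P.filter (fun p => m p = μ), ‖B p‖ ^ 2 := by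
    intro μ hμ
    obtain ⟨p₀, hp₀, hmp₀⟩ := Finset.mem_image.mp hμ
    obtain ⟨h1, h2⟩ := Finset.mem_product.mp hp₀
    have hcc1 := hc₁ p₀.1 (Finset.mem_filter.mp h1).2
    have hcc2 := hc₂ p₀.2 (Finset.mem_filter.mp h2).2
    have hμcast : (μ:ℝ) = (p₀.1 : ℝ) - (p₀.2 : ℝ) := by
      rw [← hmp₀]
      simp only [hmdef]
      push_cast
      ring
    have h2N₂ : 2 * N₂ ≤ N₁ / 4 := by linarith
    have hlow : N₁ / 4 ≤ |(μ:ℝ)| := by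
      have habs := abs_sub_abs_le_abs_sub ((p₀.1:ℝ)) ((p₀.2:ℝ))
      rw [← hμcast] at habs
      linarith [hcc1.1, hcc2.1]
    have hup : |(μ:ℝ)| ≤ 3 * N₁ := by
      have habs := abs_sub ((p₀.1:ℝ)) ((p₀.2:ℝ))
      rw [← hμcast] at habs
      linarith [hcc1.2, hcc2.1]
    have hμ0 : μ ≠ 0 := by
      intro h
      rw [h] at hlow
      simp only [Int.cast_zero, abs_zero] at hlow
      linarith
    have hπ3 : (3:ℝ) < π := Real.pi_gt_three
    have habspos : (0:ℝ) < |(μ:ℝ)| := by linarith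
    have hδT : δ ≤ π / |(μ:ℝ)| := by
      have h1' : δ ≤ 1 / N₁ := by rw [one_div]; exact hδN
      have h2' : 1 / N₁ ≤ π / (3 * N₁) := by
        rw [div_le_div_iff₀ (by positivity) (by positivity)]
        nlinarith
      have h3' : π / (3 * N₁) ≤ π / |(μ:ℝ)| := by
        apply div_le_div_of_nonneg_left Real.pi_pos.le habspos hup
      linarith
    have hworth : ∀ p ∈ P.filter (fun p => m p = μ), ∀ q ∈ P.filter (fun p => m p = μ),
        p ≠ q → ∃ k : ℤ, k ≠ 0 ∧ w p - w q = 2 * μ * k := by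
      intro p hp q hq hne
      have hp' : p.1 - p.2 = μ := (Finset.mem_filter.mp hp).2
      have hq' : q.1 - q.2 = μ := (Finset.mem_filter.mp hq).2
      refine ⟨p.2 - q.2, ?_, ?_⟩
      · intro h
        apply hne
        have h2' : p.2 = q.2 := by omega
        have h1' : p.1 = q.1 := by omega
        exact Prod.ext h1' h2'
      · have e1 : p.1 = μ + p.2 := by omega
        have e2 : q.1 = μ + q.2 := by omega
        simp only [hwdef]
        rw [e1, e2]
        ring
    calc (∫ t in (0:ℝ)..δ, ‖∑ p ∈ P.filter (fun p => m p = μ), A t p‖ ^ 2)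
        ≤ ∫ t in (0:ℝ)..(π / |(μ:ℝ)|), ‖∑ p ∈ P.filter (fun p => m p = μ), A t p‖ ^ 2 := by
          apply intervalIntegral.integral_mono_interval le_rfl hδ.le hδT
          · filter_upwards with t
            positivity
          · exact ((contA μ).intervalIntegrable _ _)
      _ = (π / |(μ:ℝ)|) * ∑ p ∈ P.filter (fun p => m p = μ), ‖B p‖ ^ 2 := by
          simpa only [hAdef] using
            time_orth (P.filter (fun p => m p = μ)) B w μ hμ0 hworth
      _ ≤ (π / (N₁ / 4)) * ∑ p ∈ P.filter (fun p => m p = μ), ‖B p‖ ^ 2 := by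
          apply mul_le_mul_of_nonneg_right
          · exact div_le_div_of_nonneg_left Real.pi_pos.le (by linarith) hlow
          · exact Finset.sum_nonneg fun _ _ => by positivity
  -- rewrite the double integral
  rw [intervalIntegral.integral_congr (g := fun t => (2 * π) *
      ∑ μ ∈ P.image m, ‖∑ p ∈ P.filter (fun p => m p = μ), A t p‖ ^ 2)
      (fun t _ => spatial t)]
  rw [intervalIntegral.integral_const_mul]
  rw [intervalIntegral.integral_finset_sum
      (fun μ _ => ((contA μ).intervalIntegrable _ _))]
  -- sum up the per-frequency bounds
  have sumbound : (∑ μ ∈ P.image m,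
      ∫ t in (0:ℝ)..δ, ‖∑ p ∈ P.filter (fun p => m p = μ), A t p‖ ^ 2)
      ≤ (π / (N₁ / 4)) * ∑ p ∈ P, ‖B p‖ ^ 2 := by
    calc (∑ μ ∈ P.image m, ∫ t in (0:ℝ)..δ, ‖∑ p ∈ P.filter (fun p => m p = μ), A t p‖ ^ 2)
        ≤ ∑ μ ∈ P.image m, (π / (N₁ / 4)) * ∑ p ∈ P.filter (fun p => m p = μ), ‖B p‖ ^ 2 :=
          Finset.sum_le_sum per
      _ = (π / (N₁ / 4)) * ∑ μ ∈ P.image m, ∑ p ∈ P.filter (fun p => m p = μ), ‖B p‖ ^ 2 :=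
          (Finset.mul_sum _ _ _).symm
      _ = (π / (N₁ / 4)) * ∑ p ∈ P, ‖B p‖ ^ 2 := by
          rw [Finset.sum_fiberwise_of_maps_to (fun p hp => Finset.mem_image_of_mem m hp)]
  have prodsum : (∑ p ∈ P, ‖B p‖ ^ 2)
      = (∑ n ∈ S₁, ‖c₁ n‖ ^ 2) * (∑ n ∈ S₂, ‖c₂ n‖ ^ 2) := by
    rw [Finset.sum_mul_sum, hPdef, Finset.sum_product]
    refine Finset.sum_congr rfl fun n₁ _ => Finset.sum_congr rfl fun n₂ _ => ?_
    simp only [hBdef]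
    rw [norm_mul, RCLike.norm_conj]
    ring
  -- summability and tsum bounds
  have hsq₁ : Summable (fun n : ℤ => ‖c₁ n‖ ^ 2) := by
    apply summable_of_ne_finset_zero (s := S₁)
    intro n hn
    have h0 : c₁ n = 0 := by
      by_contra h
      exact hn (hmem₁ n h)
    simp [h0]
  have hsq₂ : Summable (fun n : ℤ => ‖c₂ n‖ ^ 2) := by
    apply summable_of_ne_finset_zero (s := S₂)
    intro n hn
    have h0 : c₂ n = 0 := by
      by_contra h
      exact hn (hmem₂ n h)
    simp [h0]
  have t1le : (∑ n ∈ S₁, ‖c₁ n‖ ^ 2) ≤ ∑' n : ℤ, ‖c₁ n‖ ^ 2 :=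
    hsq₁.sum_le_tsum S₁ (fun n _ => by positivity)
  have t2le : (∑ n ∈ S₂, ‖c₂ n‖ ^ 2) ≤ ∑' n : ℤ, ‖c₂ n‖ ^ 2 :=
    hsq₂.sum_le_tsum S₂ (fun n _ => by positivity)
  have x1nn : (0:ℝ) ≤ ∑ n ∈ S₁, ‖c₁ n‖ ^ 2 := Finset.sum_nonneg fun _ _ => by positivity
  have x2nn : (0:ℝ) ≤ ∑ n ∈ S₂, ‖c₂ n‖ ^ 2 := Finset.sum_nonneg fun _ _ => by positivity
  have t1nn : (0:ℝ) ≤ ∑' n : ℤ, ‖c₁ n‖ ^ 2 := tsum_nonneg fun _ => by positivity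
  -- final arithmetic
  have hπ4 : π ≤ 4 := Real.pi_le_four
  have hπ0 : (0:ℝ) < π := Real.pi_pos
  have keyc : 2 * π * (π / (N₁ / 4)) ≤ 128 * N₁⁻¹ := by
    have hdiv : π / (N₁ / 4) = 4 * π * N₁⁻¹ := by
      field_simp
    rw [hdiv]
    have hinv : (0:ℝ) ≤ N₁⁻¹ := by positivity
    have h16 : π * π ≤ 16 := by nlinarith
    calc 2 * π * (4 * π * N₁⁻¹) = (8 * (π * π)) * N₁⁻¹ := by ring
      _ ≤ 128 * N₁⁻¹ := by
          apply mul_le_mul_of_nonneg_right _ hinv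
          linarith
  calc 2 * π * (∑ μ ∈ P.image m,
          ∫ t in (0:ℝ)..δ, ‖∑ p ∈ P.filter (fun p => m p = μ), A t p‖ ^ 2)
      ≤ 2 * π * ((π / (N₁ / 4)) * ((∑ n ∈ S₁, ‖c₁ n‖ ^ 2) * (∑ n ∈ S₂, ‖c₂ n‖ ^ 2))) := by
        apply mul_le_mul_of_nonneg_left _ (by positivity)
        rw [← prodsum]
        exact sumbound
    _ = (2 * π * (π / (N₁ / 4))) * ((∑ n ∈ S₁, ‖c₁ n‖ ^ 2) * (∑ n ∈ S₂, ‖c₂ n‖ ^ 2)) := by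
        ring
    _ ≤ (128 * N₁⁻¹) * ((∑' n : ℤ, ‖c₁ n‖ ^ 2) * (∑' n : ℤ, ‖c₂ n‖ ^ 2)) := by
        apply mul_le_mul keyc
        · exact mul_le_mul t1le t2le x2nn t1nn
        · exact mul_nonneg x1nn x2nn
        · positivity
    _ = 128 * N₁⁻¹ * (∑' n : ℤ, ‖c₁ n‖ ^ 2) * (∑' n : ℤ, ‖c₂ n‖ ^ 2) := by
        ring
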